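/- Let L ∈ K[D] be of order r. The set of constants of K[D]/⟨L⟩ forms a C-vector space of dimension at most r. -/

import Mathlib

/- Framework: linear differential operators over K = C(x), represented as
   `Polynomial (RatFunc C)` where `X^i` stands for `D^i` (coefficients on the left);
   local (Puiseux/Hahn series) solutions at finite points and at infinity;
   integrality; constants and pseudoconstants of `K[D]/⟨L⟩`. -/

noncomputable section
open Polynomial

variable (C : Type) [Field C] [IsAlgClosed C] [CharZero C]

/-- The derivative d/dx on K = C(x). -/
def KDeriv (r : RatFunc C) : RatFunc C :=
  (algebraMap (Polynomial C) (RatFunc C) (derivative r.num) * algebraMap _ _ r.denom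
    - algebraMap _ _ r.num * algebraMap _ _ (derivative r.denom))
  / (algebraMap (Polynomial C) (RatFunc C) r.denom) ^ 2

/-- Linear differential operators `∑ aᵢ Dⁱ` with `aᵢ ∈ C(x)`, encoded as polynomials
    whose `i`-th coefficient is the coefficient of `Dⁱ`. -/
abbrev DOp := Polynomial (RatFunc C)

/-- Left multiplication by `D` in `K[D]`: `D·(∑ aᵢ Dⁱ) = ∑ aᵢ Dⁱ⁺¹ + ∑ aᵢ' Dⁱ`. -/
def Dmul (P : DOp C) : DOp C :=
  X * P + P.sum fun i a => Polynomial.C (KDeriv C a) * X ^ i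

/-- Multiplication (composition) in the noncommutative ring `K[D]`. -/
def opMul (P Q : DOp C) : DOp C :=
  P.sum fun i a => Polynomial.C a * (Dmul C)^[i] Q

/-- The adjoint `L ↦ L*`: `(∑ aᵢ Dⁱ)* = ∑ (−D)ⁱ aᵢ`. -/
def adjoint (L : DOp C) : DOp C :=
  L.sum fun i a => (-1) ^ i * (Dmul C)^[i] (Polynomial.C a)

/-- Application of an operator to an element of `K` itself (rational solutions). -/
def KApply (L : DOp C) (q : RatFunc C) : RatFunc C :=
  L.sum fun i a => a * (KDeriv C)^[i] q

/-- `[P]_L` is zero in `K[D]/⟨L⟩`, i.e. `P` is a left multiple of `L`. -/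
def IsZeroClass (L P : DOp C) : Prop := ∃ Q : DOp C, P = opMul C Q L

/-- `[P]_L` is a constant of `K[D]/⟨L⟩`, i.e. `D·[P]_L = [0]_L`. -/
def IsConstantClass (L P : DOp C) : Prop := ∃ Q : DOp C, Dmul C P = opMul C Q L

/-- `N = lclm(L, M)`: the monic common left multiple of `L` and `M` of lowest order. -/
def IsLCLM (L M N : DOp C) : Prop :=
  N.Monic ∧ (∃ A, N = opMul C A L) ∧ (∃ B, N = opMul C B M) ∧
    ∀ N' : DOp C, N'.Monic → (∃ A, N' = opMul C A L) → (∃ B, N' = opMul C B M) →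
      N.natDegree ≤ N'.natDegree

/-- A differential field extension of `K = C(x)`. -/
structure DiffExt where
  carrier : Type
  [isField : Field carrier]
  [isAlgK : Algebra (RatFunc C) carrier]
  [isAlgC : Algebra C carrier]
  [isTower : IsScalarTower C (RatFunc C) carrier]
  δ : carrier → carrier
  δ_add : ∀ a b, δ (a + b) = δ a + δ b
  δ_mul : ∀ a b, δ (a * b) = a * δ b + δ a * b
  δ_algebraMap : ∀ r : RatFunc C,
    δ (algebraMap (RatFunc C) carrier r) = algebraMap (RatFunc C) carrier (KDeriv C r)

attribute [instance] DiffExt.isField DiffExt.isAlgK DiffExt.isAlgC DiffExt.isTower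

/-- Application of an operator `L = ∑ aᵢ Dⁱ` to an element of a differential extension. -/
def DiffExt.apply (F : DiffExt C) (L : DOp C) (f : F.carrier) : F.carrier :=
  L.sum fun i a => algebraMap (RatFunc C) F.carrier a * F.δ^[i] f

/-- Formal derivative `d/dt` on generalized (Hahn/Puiseux) series with rational exponents. -/
def hderiv (f : HahnSeries ℚ C) : HahnSeries ℚ C :=
  HahnSeries.embDomain (OrderIso.addRight (-1 : ℚ)).toOrderEmbedding
    { coeff := fun γ => γ • f.coeff γ,
      isPWO_support' := f.isPWO_support.mono (by
        intro γ hγ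
        simp only [Function.mem_support, ne_eq] at hγ ⊢
        intro hc
        exact hγ (by rw [hc, smul_zero]) ) }

/-- The derivation `d/dx = -t² d/dt` on series at infinity, in the local coordinate `t = 1/x`. -/
def dinf (f : HahnSeries ℚ C) : HahnSeries ℚ C :=
  -(HahnSeries.single (2 : ℚ) (1 : C) * hderiv C f)

/-- `ι` is a series expansion of `C(x)` (at a finite point for `δ = hderiv`, at infinity
    for `δ = dinf`), i.e. a ring embedding compatible with differentiation. -/
def IsExpansion (δ : HahnSeries ℚ C → HahnSeries ℚ C)
    (ι : RatFunc C →+* HahnSeries ℚ C) : Prop :=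
  ∀ r, ι (KDeriv C r) = δ (ι r)

/-- Application of an operator to a local series solution via the expansion `ι`. -/
def localApply (δ : HahnSeries ℚ C → HahnSeries ℚ C)
    (ι : RatFunc C →+* HahnSeries ℚ C) (L : DOp C) (f : HahnSeries ℚ C) : HahnSeries ℚ C :=
  L.sum fun i a => ι a * δ^[i] f

/-- A series is integral if it has no pole, i.e. all exponents are ≥ 0. -/
def IntegralSeries (f : HahnSeries ℚ C) : Prop := ∀ γ < (0 : ℚ), f.coeff γ = 0

/-- `[P]_L` is completely integral: at every point of `C ∪ {∞}` and every local series
    solution `f` of `L` there, `P·f` has no pole. -/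
def CompletelyIntegral (L P : DOp C) : Prop :=
  ∀ δ ∈ ({hderiv C, dinf C} : Set (HahnSeries ℚ C → HahnSeries ℚ C)),
    ∀ ι : RatFunc C →+* HahnSeries ℚ C, IsExpansion C δ ι →
      ∀ f : HahnSeries ℚ C, localApply C δ ι L f = 0 →
        IntegralSeries C (localApply C δ ι P f)

/-- A pseudoconstant of `L`: a completely integral element of `K[D]/⟨L⟩` that is not
    a constant. -/
def IsPseudoconstant (L P : DOp C) : Prop :=
  CompletelyIntegral C L P ∧ ¬ IsConstantClass C L P

def HasPseudoconstant (L : DOp C) : Prop := ∃ P : DOp C, IsPseudoconstant C L P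

/-- `S` is the `s`-th symmetric power of `L`: the monic operator of minimal order
    annihilating all products of `s` solutions of `L`. -/
def IsSymPow (L S : DOp C) (s : ℕ) : Prop :=
  S.Monic ∧
  (∀ F : DiffExt C, ∀ f : Fin s → F.carrier,
      (∀ i, F.apply C L (f i) = 0) → F.apply C S (∏ i, f i) = 0) ∧
  (∀ S' : DOp C, S'.Monic →
      (∀ F : DiffExt C, ∀ f : Fin s → F.carrier,
        (∀ i, F.apply C L (f i) = 0) → F.apply C S' (∏ i, f i) = 0) →
      S.natDegree ≤ S'.natDegree)

/-- `L` has only algebraic solutions: there is an algebraic differential extension of `K`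
    in which the solution space of `L` has dimension `ord L`. -/
def AllAlgebraic (L : DOp C) : Prop :=
  ∃ F : DiffExt C, Algebra.IsAlgebraic (RatFunc C) F.carrier ∧
    ∃ b : Fin L.natDegree → F.carrier,
      (∀ i, F.apply C L (b i) = 0) ∧ LinearIndependent C b

set_option linter.unusedSectionVars false

variable {C}

lemma KDeriv_div (p q : Polynomial C) (hq : q ≠ 0) :
    KDeriv C (algebraMap (Polynomial C) (RatFunc C) p / algebraMap _ _ q) =
      (algebraMap (Polynomial C) (RatFunc C) (derivative p) * algebraMap _ _ q
        - algebraMap _ _ p * algebraMap _ _ (derivative q))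
      / (algebraMap (Polynomial C) (RatFunc C) q) ^ 2 := by
  set f := algebraMap (Polynomial C) (RatFunc C) with hf
  set r : RatFunc C := f p / f q with hr
  have hinj : Function.Injective f := IsFractionRing.injective _ _
  have hbne : r.denom ≠ 0 := r.denom_ne_zero
  have hfq : f q ≠ 0 := fun h => hq (hinj (by simpa using h))
  have hfb : f r.denom ≠ 0 := fun h => hbne (hinj (by simpa using h))
  have hE : r.num * q = p * r.denom := by
    apply hinj
    have h0 : f r.num / f r.denom = f p / f q := by rw [RatFunc.num_div_denom]
    rw [div_eq_div_iff hfb hfq] at h0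
    simpa [map_mul] using h0
  have hE' : derivative r.num * q + r.num * derivative q
      = derivative p * r.denom + p * derivative r.denom := by
    have := congrArg derivative hE
    simpa [derivative_mul] using this
  have key : (derivative r.num * r.denom - r.num * derivative r.denom) * q ^ 2
      = (derivative p * q - p * derivative q) * r.denom ^ 2 := by
    linear_combination (q * r.denom) * hE' - (derivative r.denom * q + derivative q * r.denom) * hE
  show (f (derivative r.num) * f r.denom - f r.num * f (derivative r.denom)) / f r.denom ^ 2
      = (f (derivative p) * f q - f p * f (derivative q)) / f q ^ 2
  rw [div_eq_div_iff (pow_ne_zero _ hfb) (pow_ne_zero _ hfq)]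
  have := congrArg f key
  simpa [map_mul, map_sub, map_pow] using this

lemma KDeriv_algebraMap' (p : Polynomial C) :
    KDeriv C (algebraMap (Polynomial C) (RatFunc C) p) = algebraMap _ _ (derivative p) := by
  have := KDeriv_div p 1 (one_ne_zero)
  simpa using this

lemma KDeriv_zero : KDeriv C 0 = 0 := by
  simpa using KDeriv_algebraMap' (0 : Polynomial C)

lemma KDeriv_algC (c : C) : KDeriv C (algebraMap C (RatFunc C) c) = 0 := by
  rw [IsScalarTower.algebraMap_apply C (Polynomial C) (RatFunc C) c]
  simpa using KDeriv_algebraMap' (Polynomial.C c)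

lemma KDeriv_one : KDeriv C 1 = 0 := by
  simpa using KDeriv_algC (1 : C)

lemma KDeriv_add (r s : RatFunc C) : KDeriv C (r + s) = KDeriv C r + KDeriv C s := by
  set f := algebraMap (Polynomial C) (RatFunc C) with hf
  have hfne : ∀ q : Polynomial C, q ≠ 0 → f q ≠ 0 := fun q hq h =>
    hq ((IsFractionRing.injective (Polynomial C) (RatFunc C)) (show f q = f 0 by rw [map_zero]; exact h))
  have hd1 := r.denom_ne_zero
  have hd2 := s.denom_ne_zero
  have hfd1 : f r.denom ≠ 0 := hfne _ hd1
  have hfd2 : f s.denom ≠ 0 := hfne _ hd2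
  have e1 : f r.num = r * f r.denom := (div_eq_iff hfd1).mp (RatFunc.num_div_denom r)
  have e2 : f s.num = s * f s.denom := (div_eq_iff hfd2).mp (RatFunc.num_div_denom s)
  have hx : r + s = f (r.num * s.denom + s.num * r.denom) / f (r.denom * s.denom) := by
    rw [eq_div_iff (hfne _ (mul_ne_zero hd1 hd2)), map_add, map_mul, map_mul, map_mul]
    linear_combination (-(f s.denom)) * e1 - (f r.denom) * e2
  have hKsum := KDeriv_div (r.num * s.denom + s.num * r.denom) (r.denom * s.denom)
    (mul_ne_zero hd1 hd2)
  rw [← hx] at hKsum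
  have hKr := KDeriv_div r.num r.denom hd1
  rw [RatFunc.num_div_denom] at hKr
  have hKs := KDeriv_div s.num s.denom hd2
  rw [RatFunc.num_div_denom] at hKs
  rw [hKsum, hKr, hKs]
  simp only [derivative_add, derivative_mul, map_add, map_mul]
  simp only [hf] at hfd1 hfd2 ⊢
  field_simp
  ring

lemma KDeriv_mul (r s : RatFunc C) : KDeriv C (r * s) = r * KDeriv C s + KDeriv C r * s := by
  set f := algebraMap (Polynomial C) (RatFunc C) with hf
  have hfne : ∀ q : Polynomial C, q ≠ 0 → f q ≠ 0 := fun q hq h =>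
    hq ((IsFractionRing.injective (Polynomial C) (RatFunc C)) (show f q = f 0 by rw [map_zero]; exact h))
  have hd1 := r.denom_ne_zero
  have hd2 := s.denom_ne_zero
  have hfd1 : f r.denom ≠ 0 := hfne _ hd1
  have hfd2 : f s.denom ≠ 0 := hfne _ hd2
  have e1 : f r.num = r * f r.denom := (div_eq_iff hfd1).mp (RatFunc.num_div_denom r)
  have e2 : f s.num = s * f s.denom := (div_eq_iff hfd2).mp (RatFunc.num_div_denom s)
  have hx : r * s = f (r.num * s.num) / f (r.denom * s.denom) := by
    rw [eq_div_iff (hfne _ (mul_ne_zero hd1 hd2)), map_mul, map_mul]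
    linear_combination (-(f s.num)) * e1 - (r * f r.denom) * e2
  have hKmul := KDeriv_div (r.num * s.num) (r.denom * s.denom) (mul_ne_zero hd1 hd2)
  rw [← hx] at hKmul
  have hKr := KDeriv_div r.num r.denom hd1
  rw [RatFunc.num_div_denom] at hKr
  have hKs := KDeriv_div s.num s.denom hd2
  rw [RatFunc.num_div_denom] at hKs
  rw [hKmul, hKr, hKs]
  simp only [derivative_mul, map_add, map_mul]
  rw [e1, e2]
  simp only [hf] at hfd1 hfd2 ⊢
  field_simp
  ring

lemma KDeriv_eq_zero {r : RatFunc C} (h : KDeriv C r = 0) :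
    ∃ c : C, r = algebraMap C (RatFunc C) c := by
  set f := algebraMap (Polynomial C) (RatFunc C) with hf
  have hinj : Function.Injective f := IsFractionRing.injective _ _
  have hfne : ∀ q : Polynomial C, q ≠ 0 → f q ≠ 0 := fun q hq h =>
    hq (hinj (show f q = f 0 by rw [map_zero]; exact h))
  have hd := r.denom_ne_zero
  have hfd : f r.denom ≠ 0 := hfne _ hd
  unfold KDeriv at h
  rw [_root_.div_eq_zero_iff] at h
  rcases h with h | h
  · rw [sub_eq_zero] at h
    have hpoly : derivative r.num * r.denom = r.num * derivative r.denom := by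
      apply hinj; rw [map_mul, map_mul]; exact h
    have hdvd : r.denom ∣ r.num * derivative r.denom := ⟨derivative r.num, by rw [← hpoly]; ring⟩
    have hco : IsCoprime r.denom r.num := (RatFunc.isCoprime_num_denom r).symm
    have hdd : r.denom ∣ derivative r.denom := hco.dvd_of_dvd_mul_left hdvd
    have hder0 : derivative r.denom = 0 := by
      by_contra hne
      have h1 := Polynomial.degree_le_of_dvd hdd hne
      have h2 := Polynomial.degree_derivative_lt hd
      exact absurd (lt_of_le_of_lt h1 h2) (lt_irrefl _)
    have hnd : r.denom.natDegree = 0 := natDegree_eq_zero_of_derivative_eq_zero hder0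
    have hmon := RatFunc.monic_denom r
    have hone : r.denom = 1 := hmon.natDegree_eq_zero.mp hnd
    have hnum0 : derivative r.num = 0 := by
      rw [hone] at hpoly
      simpa using hpoly
    have hnn : r.num.natDegree = 0 := natDegree_eq_zero_of_derivative_eq_zero hnum0
    obtain ⟨c, hc⟩ : ∃ c : C, r.num = Polynomial.C c := ⟨_, Polynomial.eq_C_of_natDegree_eq_zero hnn⟩
    refine ⟨c, ?_⟩
    rw [← RatFunc.num_div_denom r, hone, hc, map_one, div_one,
      IsScalarTower.algebraMap_apply C (Polynomial C) (RatFunc C), Polynomial.algebraMap_eq]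
  · exact absurd h (pow_ne_zero _ hfd)

lemma KDeriv_smul (c : C) (r : RatFunc C) : KDeriv C (c • r) = c • KDeriv C r := by
  rw [Algebra.smul_def, KDeriv_mul, KDeriv_algC, Algebra.smul_def]
  ring

lemma dpart_coeff (P : DOp C) (n : ℕ) :
    (P.sum fun i a => Polynomial.C (KDeriv C a) * X ^ i).coeff n = KDeriv C (P.coeff n) := by
  rw [Polynomial.sum_def, Polynomial.finset_sum_coeff]
  simp only [Polynomial.coeff_C_mul, Polynomial.coeff_X_pow, mul_ite, mul_one, mul_zero]
  rw [Finset.sum_ite_eq P.support n (fun i => KDeriv C (P.coeff i))]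
  split_ifs with h
  · rfl
  · rw [Polynomial.notMem_support_iff.mp h, KDeriv_zero]

lemma Dmul_coeff_zero (P : DOp C) : (Dmul C P).coeff 0 = KDeriv C (P.coeff 0) := by
  unfold Dmul
  rw [Polynomial.coeff_add, dpart_coeff]
  simp [Polynomial.mul_coeff_zero]

lemma Dmul_coeff_succ (P : DOp C) (n : ℕ) :
    (Dmul C P).coeff (n + 1) = P.coeff n + KDeriv C (P.coeff (n + 1)) := by
  unfold Dmul
  rw [Polynomial.coeff_add, dpart_coeff, Polynomial.coeff_X_mul]

lemma Dmul_zero : Dmul C 0 = 0 := by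
  unfold Dmul
  rw [Polynomial.sum_zero_index]
  simp

lemma Dmul_add (P Q : DOp C) : Dmul C (P + Q) = Dmul C P + Dmul C Q := by
  ext n
  cases n with
  | zero => simp [Dmul_coeff_zero, KDeriv_add]
  | succ n => simp [Dmul_coeff_succ, KDeriv_add]; ring_nf

lemma Dmul_smul (c : C) (P : DOp C) : Dmul C (c • P) = c • Dmul C P := by
  ext n
  cases n with
  | zero => simp [Dmul_coeff_zero, Polynomial.coeff_smul, KDeriv_smul]
  | succ n => simp [Dmul_coeff_succ, Polynomial.coeff_smul, KDeriv_smul, smul_add]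

lemma Dmul_C_mul (a : RatFunc C) (P : DOp C) :
    Dmul C (Polynomial.C a * P) = Polynomial.C a * Dmul C P + Polynomial.C (KDeriv C a) * P := by
  ext n
  cases n with
  | zero => simp [Dmul_coeff_zero, KDeriv_mul] <;> ring
  | succ n => simp [Dmul_coeff_succ, KDeriv_mul] <;> ring

lemma Dmul_natDegree_coeff {P : DOp C} (hP : P ≠ 0) :
    (Dmul C P).natDegree = P.natDegree + 1 ∧ (Dmul C P).leadingCoeff = P.leadingCoeff := by
  have htop : (Dmul C P).coeff (P.natDegree + 1) = P.leadingCoeff := by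
    rw [Dmul_coeff_succ, Polynomial.coeff_natDegree,
      Polynomial.coeff_eq_zero_of_natDegree_lt (show P.natDegree < P.natDegree + 1 by omega),
      KDeriv_zero, add_zero]
  have hne : P.leadingCoeff ≠ 0 := Polynomial.leadingCoeff_ne_zero.mpr hP
  have hle : (Dmul C P).natDegree ≤ P.natDegree + 1 := by
    rw [Polynomial.natDegree_le_iff_coeff_eq_zero]
    intro m hm
    obtain ⟨k, rfl⟩ : ∃ k, m = k + 1 := ⟨m - 1, by omega⟩
    rw [Dmul_coeff_succ, Polynomial.coeff_eq_zero_of_natDegree_lt (by omega),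
      Polynomial.coeff_eq_zero_of_natDegree_lt (by omega), KDeriv_zero, add_zero]
  have hge : P.natDegree + 1 ≤ (Dmul C P).natDegree :=
    Polynomial.le_natDegree_of_ne_zero (htop ▸ hne)
  have hdeg : (Dmul C P).natDegree = P.natDegree + 1 := le_antisymm hle hge
  exact ⟨hdeg, by rw [Polynomial.leadingCoeff, hdeg, htop]⟩

lemma Dmul_ne_zero {P : DOp C} (hP : P ≠ 0) : Dmul C P ≠ 0 := by
  intro h
  have := (Dmul_natDegree_coeff hP).2
  rw [h, Polynomial.leadingCoeff_zero] at this
  exact Polynomial.leadingCoeff_ne_zero.mpr hP this.symm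

lemma iter_Dmul {L : DOp C} (hL : L ≠ 0) (i : ℕ) :
    (Dmul C)^[i] L ≠ 0 ∧ ((Dmul C)^[i] L).natDegree = L.natDegree + i ∧
      ((Dmul C)^[i] L).leadingCoeff = L.leadingCoeff := by
  induction i with
  | zero => simp [hL]
  | succ n ih =>
    rw [Function.iterate_succ_apply']
    obtain ⟨h0, h1, h2⟩ := ih
    refine ⟨Dmul_ne_zero h0, ?_, ?_⟩
    · rw [(Dmul_natDegree_coeff h0).1, h1]; omega
    · rw [(Dmul_natDegree_coeff h0).2, h2]

lemma opMul_zero_left (L : DOp C) : opMul C 0 L = 0 := Polynomial.sum_zero_index _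

lemma opMul_add_left (P Q L : DOp C) :
    opMul C (P + Q) L = opMul C P L + opMul C Q L := by
  unfold opMul
  rw [Polynomial.sum_add_index]
  · intro i; simp
  · intro i a b; rw [map_add, add_mul]

lemma opMul_C_left (a : RatFunc C) (L : DOp C) :
    opMul C (Polynomial.C a) L = Polynomial.C a * L := by
  unfold opMul
  rw [Polynomial.sum_C_index (by simp)]
  simp

lemma opMul_smul_left (c : C) (Q L : DOp C) :
    opMul C (c • Q) L = c • opMul C Q L := by
  unfold opMul
  rw [Polynomial.sum_smul_index' _ _ _ (fun i => by simp)]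
  rw [Polynomial.sum_def, Polynomial.sum_def, Finset.smul_sum]
  refine Finset.sum_congr rfl fun i _ => ?_
  rw [← Polynomial.smul_C, smul_mul_assoc]

lemma opMul_coeff_top {Q L : DOp C} (hQ : Q ≠ 0) (hL : L ≠ 0) :
    (opMul C Q L).coeff (Q.natDegree + L.natDegree) = Q.leadingCoeff * L.leadingCoeff := by
  unfold opMul
  rw [Polynomial.sum_def, Polynomial.finset_sum_coeff]
  rw [Finset.sum_eq_single Q.natDegree]
  · obtain ⟨h0, h1, h2⟩ := iter_Dmul hL Q.natDegree
    rw [Polynomial.coeff_C_mul]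
    rw [show Q.natDegree + L.natDegree = ((Dmul C)^[Q.natDegree] L).natDegree by rw [h1]; omega]
    rw [show ((Dmul C)^[Q.natDegree] L).coeff ((Dmul C)^[Q.natDegree] L).natDegree
        = L.leadingCoeff by rw [Polynomial.coeff_natDegree, h2]]
    rfl
  · intro i hi hne
    have hile : i ≤ Q.natDegree := Polynomial.le_natDegree_of_ne_zero
      (Polynomial.mem_support_iff.mp hi)
    obtain ⟨h0, h1, h2⟩ := iter_Dmul hL i
    apply Polynomial.coeff_eq_zero_of_natDegree_lt
    calc (Polynomial.C (Q.coeff i) * (Dmul C)^[i] L).natDegree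
        ≤ ((Dmul C)^[i] L).natDegree := Polynomial.natDegree_C_mul_le _ _
      _ < Q.natDegree + L.natDegree := by rw [h1]; omega
  · intro h
    exact absurd (Polynomial.mem_support_iff.mpr (Polynomial.leadingCoeff_ne_zero.mpr hQ)) h

variable (C) in
def del (L P : DOp C) : DOp C :=
  Dmul C P - Polynomial.C (P.coeff (L.natDegree - 1) * L.leadingCoeff⁻¹) * L

lemma del_zero (L : DOp C) : del C L 0 = 0 := by
  unfold del
  simp [Dmul_zero]

lemma del_add (L P Q : DOp C) : del C L (P + Q) = del C L P + del C L Q := by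
  unfold del
  rw [Dmul_add, Polynomial.coeff_add]
  ring_nf
  rw [map_add]
  ring

lemma del_C_mul (L : DOp C) (a : RatFunc C) (P : DOp C) :
    del C L (Polynomial.C a * P)
      = Polynomial.C a * del C L P + Polynomial.C (KDeriv C a) * P := by
  unfold del
  rw [Dmul_C_mul, Polynomial.coeff_C_mul]
  simp only [map_mul]
  ring

lemma constant_del_eq_zero {L P : DOp C} (hL : L ≠ 0) (hdeg : P.natDegree < L.natDegree)
    (h : ∃ Q : DOp C, Dmul C P = opMul C Q L) : del C L P = 0 := by
  obtain ⟨Q, hQ⟩ := h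
  set r := L.natDegree with hr
  have hr1 : 1 ≤ r := by omega
  by_cases hP : P = 0
  · subst hP; exact del_zero L
  · have hQ0 : Q ≠ 0 := by
      rintro rfl
      rw [opMul_zero_left] at hQ
      exact Dmul_ne_zero hP hQ
    have hdQ : Q.natDegree = 0 := by
      by_contra h0
      have hcoeff : (opMul C Q L).coeff (Q.natDegree + r) ≠ 0 := by
        rw [opMul_coeff_top hQ0 hL]
        exact mul_ne_zero (Polynomial.leadingCoeff_ne_zero.mpr hQ0)
          (Polynomial.leadingCoeff_ne_zero.mpr hL)
      have h1 : Q.natDegree + r ≤ (Dmul C P).natDegree := by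
        rw [hQ]; exact Polynomial.le_natDegree_of_ne_zero hcoeff
      have h2 : (Dmul C P).natDegree = P.natDegree + 1 := (Dmul_natDegree_coeff hP).1
      omega
    have hQC : Q = Polynomial.C (Q.coeff 0) := Polynomial.eq_C_of_natDegree_eq_zero hdQ
    rw [hQC, opMul_C_left] at hQ
    have hc : (Dmul C P).coeff r = P.coeff (r - 1) := by
      obtain ⟨k, hk⟩ : ∃ k, r = k + 1 := ⟨r - 1, by omega⟩
      rw [hk, Dmul_coeff_succ,
        show P.coeff (k + 1) = 0 from Polynomial.coeff_eq_zero_of_natDegree_lt (by omega),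
        KDeriv_zero, add_zero]
      norm_num
    have hval : Q.coeff 0 * L.leadingCoeff = P.coeff (r - 1) := by
      rw [hQ, Polynomial.coeff_C_mul] at hc
      rw [← hc]
      rfl
    have hlc : L.leadingCoeff ≠ 0 := Polynomial.leadingCoeff_ne_zero.mpr hL
    have hq0 : Q.coeff 0 = P.coeff (r - 1) * L.leadingCoeff⁻¹ := by
      field_simp
      exact hval
    unfold del
    rw [hQ, ← hq0, sub_eq_zero]

lemma flat_linearIndependent (L : DOp C) {ι : Type} (v : ι → DOp C)
    (hv : ∀ i, del C L (v i) = 0) (hind : LinearIndependent C v) :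
    LinearIndependent (RatFunc C) v := by
  classical
  have hdel : ∀ (a : RatFunc C) (P : DOp C), del C L P = 0 →
      del C L (a • P) = Polynomial.C (KDeriv C a) * P := by
    intro a P hP
    rw [Polynomial.smul_eq_C_mul, del_C_mul, hP, mul_zero, zero_add]
  rw [linearIndependent_iff']
  suffices H : ∀ n (s : Finset ι) (g : ι → RatFunc C), s.card = n →
      ∑ i ∈ s, g i • v i = 0 → ∀ i ∈ s, g i = 0 by
    intro s g hrel i hi
    exact H s.card s g rfl hrel i hi
  intro n
  induction n using Nat.strong_induction_on with
  | _ n IH =>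
    intro s g hcard hrel
    by_contra hcon
    push_neg at hcon
    obtain ⟨i0, hi0s, hi0⟩ := hcon
    set h : ι → RatFunc C := fun i => (g i0)⁻¹ * g i with hh
    have hh0 : h i0 = 1 := inv_mul_cancel₀ hi0
    have hrel1 : ∑ i ∈ s, h i • v i = 0 := by
      have : ∑ i ∈ s, h i • v i = (g i0)⁻¹ • ∑ i ∈ s, g i • v i := by
        rw [Finset.smul_sum]
        exact Finset.sum_congr rfl fun i _ => by rw [hh, mul_smul]
      rw [this, hrel, smul_zero]
    have hD : ∑ i ∈ s, Polynomial.C (KDeriv C (h i)) * v i = 0 := by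
      have hdelhom := map_sum (AddMonoidHom.mk' (del C L) (del_add L))
        (fun i => h i • v i) s
      have : del C L (∑ i ∈ s, h i • v i) = ∑ i ∈ s, Polynomial.C (KDeriv C (h i)) * v i := by
        rw [show del C L = (AddMonoidHom.mk' (del C L) (del_add L)) from rfl, hdelhom]
        exact Finset.sum_congr rfl fun i _ => hdel _ _ (hv i)
      rw [hrel1, del_zero] at this
      exact this.symm
    have hD' : ∑ i ∈ s.erase i0, Polynomial.C (KDeriv C (h i)) * v i = 0 := by
      rw [← Finset.add_sum_erase s _ hi0s] at hD
      rw [hh0, KDeriv_one] at hD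
      simpa using hD
    have hKd : ∀ i ∈ s, KDeriv C (h i) = 0 := by
      intro i hi
      by_cases hii : i = i0
      · rw [hii, hh0, KDeriv_one]
      · have hmem : i ∈ s.erase i0 := Finset.mem_erase.mpr ⟨hii, hi⟩
        have hcardlt : (s.erase i0).card < n := by
          rw [← hcard]
          exact Finset.card_erase_lt_of_mem hi0s
        refine IH _ hcardlt (s.erase i0) (fun j => KDeriv C (h j)) rfl ?_ i hmem
        calc ∑ j ∈ s.erase i0, KDeriv C (h j) • v j
            = ∑ j ∈ s.erase i0, Polynomial.C (KDeriv C (h j)) * v j :=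
              Finset.sum_congr rfl fun j _ => by rw [Polynomial.smul_eq_C_mul]
          _ = 0 := hD'
    have hconst : ∀ i ∈ s, ∃ ci : C, h i = algebraMap C (RatFunc C) ci :=
      fun i hi => KDeriv_eq_zero (hKd i hi)
    classical
    set c : ι → C := fun i => if hi : i ∈ s then (hconst i hi).choose else 0 with hcdef
    have hc : ∀ i ∈ s, h i = algebraMap C (RatFunc C) (c i) := by
      intro i hi
      rw [hcdef]
      simp only [dif_pos hi]
      exact (hconst i hi).choose_spec
    have hCrel : ∑ i ∈ s, c i • v i = 0 := by
      rw [← hrel1]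
      refine Finset.sum_congr rfl fun i hi => ?_
      rw [hc i hi, algebraMap_smul]
    have hczero : ∀ i ∈ s, c i = 0 := linearIndependent_iff'.mp hind s c hCrel
    have : (1 : RatFunc C) = 0 := by
      rw [← hh0, hc i0 hi0s, hczero i0 hi0s, map_zero]
    exact one_ne_zero this

variable (C)

/-- Prop. 2(3): the constants of `K[D]/⟨L⟩` form a `C`-vector space of dimension
at most `ord L` (closure under the operations, and the canonical representatives
are spanned by `ord L` elements). -/
theorem constants_form_space_of_dimension_at_most_order (L : DOp C) (hL : L ≠ 0) :
    (IsConstantClass C L 0) ∧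
    (∀ P Q : DOp C, IsConstantClass C L P → IsConstantClass C L Q →
      IsConstantClass C L (P + Q)) ∧
    (∀ (c : C) (P : DOp C), IsConstantClass C L P → IsConstantClass C L (c • P)) ∧
    ∃ b : Fin L.natDegree → DOp C, ∀ P : DOp C, P.natDegree < L.natDegree →
      IsConstantClass C L P → P ∈ Submodule.span C (Set.range b) := by
  refine ⟨⟨0, by rw [Dmul_zero, opMul_zero_left]⟩, ?_, ?_, ?_⟩
  · rintro P Q ⟨A, hA⟩ ⟨B, hB⟩
    exact ⟨A + B, by rw [Dmul_add, hA, hB, opMul_add_left]⟩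
  · rintro c P ⟨A, hA⟩
    exact ⟨c • A, by rw [Dmul_smul, hA, opMul_smul_left]⟩
  · set r := L.natDegree with hrdef
    by_cases hr : r = 0
    · exact ⟨fun _ => 0, fun P hP => by omega⟩
    -- the submodule of horizontal sections of degree < r
    have hVdef : ∃ V : Submodule C (DOp C),
        ∀ P : DOp C, P ∈ V ↔ (P ∈ Polynomial.degreeLT (RatFunc C) r ∧ del C L P = 0) := by
      refine ⟨{ carrier := {P | P ∈ Polynomial.degreeLT (RatFunc C) r ∧ del C L P = 0},
                add_mem' := ?_, zero_mem' := ?_, smul_mem' := ?_ }, fun P => Iff.rfl⟩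
      · rintro a b ⟨ha1, ha2⟩ ⟨hb1, hb2⟩
        exact ⟨Submodule.add_mem _ ha1 hb1, by rw [del_add, ha2, hb2, add_zero]⟩
      · exact ⟨Submodule.zero_mem _, del_zero L⟩
      · rintro c x ⟨hx1, hx2⟩
        have hsm : c • x = Polynomial.C (algebraMap C (RatFunc C) c) * x := by
          rw [← Polynomial.smul_eq_C_mul, algebraMap_smul]
        constructor
        · show c • x ∈ _
          rw [hsm, ← Polynomial.smul_eq_C_mul]
          exact Submodule.smul_mem _ _ hx1
        · show del C L (c • x) = 0
          rw [hsm, del_C_mul, hx2, KDeriv_algC, map_zero, mul_zero, zero_mul, add_zero]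
    obtain ⟨V, hV⟩ := hVdef
    -- dimension bound
    have hFD : FiniteDimensional (RatFunc C) (Polynomial.degreeLT (RatFunc C) r) :=
      Module.Finite.equiv (Polynomial.degreeLTEquiv (RatFunc C) r).symm
    have hfr : Module.finrank (RatFunc C) (Polynomial.degreeLT (RatFunc C) r) = r := by
      rw [LinearEquiv.finrank_eq (Polynomial.degreeLTEquiv (RatFunc C) r)]
      exact Module.finrank_fin_fun _
    have hrank : Module.rank C V ≤ (r : Cardinal) := by
      apply rank_le
      intro s hs
      -- the family in DOp C
      have hsub : LinearIndependent C (fun i : s => ((i : V) : DOp C)) :=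
        hs.map' V.subtype (Submodule.ker_subtype V)
      have hK : LinearIndependent (RatFunc C) (fun i : s => ((i : V) : DOp C)) := by
        apply flat_linearIndependent L
        · exact fun i => ((hV _).mp (i : V).2).2
        · exact hsub
      -- inside degreeLT
      set w : s → Polynomial.degreeLT (RatFunc C) r :=
        fun i => ⟨((i : V) : DOp C), ((hV _).mp (i : V).2).1⟩ with hw
      have hKw : LinearIndependent (RatFunc C) w := by
        apply LinearIndependent.of_comp (Polynomial.degreeLT (RatFunc C) r).subtype
        exact hK
      have := hKw.fintype_card_le_finrank
      rw [hfr, Fintype.card_coe] at this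
      exact this
    have hfin : FiniteDimensional C V :=
      Module.rank_lt_aleph0_iff.mp (lt_of_le_of_lt hrank (Cardinal.nat_lt_aleph0 r))
    have hn : Module.finrank C V ≤ r := Module.finrank_le_of_rank_le hrank
    set bV := Module.finBasis C V with hbV
    refine ⟨fun i => if h : (i : ℕ) < Module.finrank C V then (bV ⟨i, h⟩ : DOp C) else 0, ?_⟩
    intro P hPdeg hPconst
    have hPV : P ∈ V := by
      rw [hV]
      constructor
      · rw [Polynomial.mem_degreeLT]
        calc P.degree ≤ (P.natDegree : WithBot ℕ) := Polynomial.degree_le_natDegree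
          _ < (r : WithBot ℕ) := by exact_mod_cast hPdeg
      · exact constant_del_eq_zero hL hPdeg hPconst
    have htop : (⟨P, hPV⟩ : V) ∈ Submodule.span C (Set.range bV) := by
      rw [bV.span_eq]; trivial
    have h1 : P ∈ Submodule.span C (V.subtype '' Set.range bV) := by
      rw [← Submodule.map_span]
      exact ⟨⟨P, hPV⟩, htop, rfl⟩
    refine Submodule.span_mono ?_ h1
    rintro _ ⟨_, ⟨j, rfl⟩, rfl⟩
    refine ⟨⟨(j : ℕ), lt_of_lt_of_le j.2 hn⟩, ?_⟩
    simp only [dif_pos (show ((⟨(j : ℕ), lt_of_lt_of_le j.2 hn⟩ : Fin r) : ℕ) < Module.finrank C V from j.2)]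
    congr 1

end
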